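/- Multivariate deformed Vandermonde formula in rising-factorial form: let 0 < τ₂ < τ₁ be reals, let n, k be naturals with k ≥ 1, and let x₁, …, x_{k+1} be real numbers. Then [x₁ + ⋯ + x_{k+1} + n − 1]_n = Σ M(n; r₁,…,r_k) · τ₁^{Σ_{j=1}^{k} x_j(n − s_j)} · τ₂^{Σ_{j=1}^{k} r_j z_j} · ∏_{j=1}^{k+1} [x_j + r_j − 1]_{r_j}, where the sum runs over all tuples (r₁,…,r_k) of naturals with r₁ + ⋯ + r_k ≤ n, and where s_j = r₁ + ⋯ + r_j, r_{k+1} = n − s_k, and z_j = x_{j+1} + ⋯ + x_{k+1}. -/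

import Mathlib

open Finset

noncomputable def dnum (τ₁ τ₂ x : ℝ) : ℝ := (τ₁ ^ x - τ₂ ^ x) / (τ₁ - τ₂)

noncomputable def dfac (τ₁ τ₂ : ℝ) (r : ℕ) : ℝ :=
  ∏ j ∈ Finset.range r, dnum τ₁ τ₂ ((j : ℝ) + 1)

noncomputable def dfall (τ₁ τ₂ x : ℝ) (r : ℕ) : ℝ :=
  ∏ i ∈ Finset.range r, dnum τ₁ τ₂ (x - (i : ℝ))

noncomputable def dbinom (τ₁ τ₂ x : ℝ) (r : ℕ) : ℝ := dfall τ₁ τ₂ x r / dfac τ₁ τ₂ r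

noncomputable def dmulti (τ₁ τ₂ x : ℝ) {k : ℕ} (r : Fin k → ℕ) : ℝ :=
  dfall τ₁ τ₂ x (∑ j, r j) / ∏ j, dfac τ₁ τ₂ (r j)

lemma Iic_filter {k : ℕ} (t : Fin k) : Finset.Iic t = univ.filter (· ≤ t) := by ext i; simp

lemma sum_Iic_cons {k : ℕ} (a : ℕ) (f : Fin k → ℕ) (j : Fin k) :
    ∑ i ∈ Finset.Iic (j.succ), (Fin.cons a f : Fin (k+1) → ℕ) i = a + ∑ i ∈ Finset.Iic j, f i := by
  rw [Iic_filter, Iic_filter, Finset.sum_filter, Finset.sum_filter, Fin.sum_univ_succ]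
  simp only [Fin.cons_zero, Fin.cons_succ, Fin.zero_le, if_true, Fin.succ_le_succ_iff]

lemma sum_Iic_zero {k : ℕ} (g : Fin (k+1) → ℕ) :
    ∑ i ∈ Finset.Iic (0 : Fin (k+1)), g i = g 0 := by
  rw [Iic_filter, Finset.sum_filter, Fin.sum_univ_succ]
  simp only [Fin.le_zero_iff, if_true]
  rw [Finset.sum_eq_zero fun x _ => by simp [Fin.succ_ne_zero]]
  simp

lemma snoc_cons_zero {k : ℕ} (a : ℕ) (f : Fin k → ℕ) (m : ℕ) :
    (Fin.snoc (Fin.cons a f) m : Fin (k+2) → ℕ) 0 = a := by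
  simp [Fin.snoc, Fin.castPred_zero]

lemma snoc_cons_succ {k : ℕ} (a : ℕ) (f : Fin k → ℕ) (m : ℕ) (j : Fin (k+1)) :
    (Fin.snoc (Fin.cons a f) m : Fin (k+2) → ℕ) j.succ = (Fin.snoc f m : Fin (k+1) → ℕ) j := by
  refine Fin.lastCases ?_ (fun j' => ?_) j
  · rw [Fin.succ_last, Fin.snoc_last, Fin.snoc_last]
  · rw [Fin.succ_castSucc, Fin.snoc_castSucc, Fin.snoc_castSucc, Fin.cons_succ]

section Aux
variable {τ₁ τ₂ : ℝ} (hτ₂ : 0 < τ₂) (hττ : τ₂ < τ₁)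
include hτ₂ hττ

omit hτ₂ hττ in
lemma dnum_zero : dnum τ₁ τ₂ 0 = 0 := by simp [dnum]

lemma dnum_pos {x : ℝ} (hx : 0 < x) : 0 < dnum τ₁ τ₂ x := by
  have h1 : τ₂ ^ x < τ₁ ^ x := Real.rpow_lt_rpow hτ₂.le hττ hx
  exact div_pos (by linarith) (by linarith)

lemma dfac_pos (r : ℕ) : 0 < dfac τ₁ τ₂ r := by
  refine Finset.prod_pos fun j _ => dnum_pos hτ₂ hττ (by positivity)

lemma dnum_add (p q : ℝ) :
    dnum τ₁ τ₂ (p + q) = τ₁ ^ q * dnum τ₁ τ₂ p + τ₂ ^ p * dnum τ₁ τ₂ q := by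
  have hτ₁ : (0:ℝ) < τ₁ := hτ₂.trans hττ
  have hd : τ₁ - τ₂ ≠ 0 := by linarith
  unfold dnum
  rw [Real.rpow_add hτ₁, Real.rpow_add hτ₂]
  field_simp
  ring

omit hτ₂ hττ in
lemma dfall_zero (x : ℝ) : dfall τ₁ τ₂ x 0 = 1 := by simp [dfall]

omit hτ₂ hττ in
lemma dfall_succ (x : ℝ) (m : ℕ) :
    dfall τ₁ τ₂ x (m + 1) = dfall τ₁ τ₂ x m * dnum τ₁ τ₂ (x - m) := by
  simp [dfall, Finset.prod_range_succ]

omit hτ₂ hττ in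
lemma dfall_peel (x : ℝ) (m : ℕ) :
    dfall τ₁ τ₂ x (m + 1) = dnum τ₁ τ₂ x * dfall τ₁ τ₂ (x - 1) m := by
  simp only [dfall, Finset.prod_range_succ']
  rw [mul_comm]
  simp only [Nat.cast_zero, sub_zero]
  congr 1
  refine Finset.prod_congr rfl fun i _ => ?_
  congr 1
  push_cast
  ring

omit hτ₂ hττ in
lemma dfall_add (x : ℝ) (p q : ℕ) :
    dfall τ₁ τ₂ x (p + q) = dfall τ₁ τ₂ x p * dfall τ₁ τ₂ (x - p) q := by
  simp only [dfall, Finset.prod_range_add]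
  congr 1
  refine Finset.prod_congr rfl fun i _ => ?_
  congr 1
  push_cast
  ring

omit hτ₂ hττ in
lemma dfac_succ (r : ℕ) : dfac τ₁ τ₂ (r + 1) = dfac τ₁ τ₂ r * dnum τ₁ τ₂ (r + 1) := by
  simp [dfac, Finset.prod_range_succ]

omit hτ₂ hττ in
lemma dfall_nat_self_succ (n : ℕ) : dfall τ₁ τ₂ (n : ℝ) (n + 1) = 0 := by
  rw [dfall]
  refine Finset.prod_eq_zero (Finset.self_mem_range_succ n) ?_
  simp [dnum]

lemma pascal (n s : ℕ) :
    dbinom τ₁ τ₂ (↑(n+1)) (s+1) =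
      τ₁ ^ ((s:ℝ)+1) * dbinom τ₁ τ₂ (n:ℝ) (s+1) +
      τ₂ ^ ((n:ℝ)-(s:ℝ)) * dbinom τ₁ τ₂ (n:ℝ) s := by
  have hτ₁ : (0:ℝ) < τ₁ := hτ₂.trans hττ
  have h1 : dfall τ₁ τ₂ (↑(n+1)) (s+1) = dnum τ₁ τ₂ (↑(n+1)) * dfall τ₁ τ₂ (n:ℝ) s := by
    rw [dfall_peel]
    norm_num
  have h2 : dnum τ₁ τ₂ (↑(n+1) : ℝ) =
      τ₁ ^ ((s:ℝ)+1) * dnum τ₁ τ₂ ((n:ℝ) - s) + τ₂ ^ ((n:ℝ)-(s:ℝ)) * dnum τ₁ τ₂ ((s:ℝ)+1) := by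
    have := dnum_add (τ₁ := τ₁) (τ₂ := τ₂) hτ₂ hττ ((n:ℝ) - s) ((s:ℝ)+1)
    rw [show ((n:ℝ) - s) + ((s:ℝ)+1) = ↑(n+1) by push_cast; ring] at this
    exact this
  have h3 : dfall τ₁ τ₂ (n:ℝ) (s+1) = dfall τ₁ τ₂ (n:ℝ) s * dnum τ₁ τ₂ ((n:ℝ) - s) :=
    dfall_succ _ _
  have hfz : dfac τ₁ τ₂ s ≠ 0 := (dfac_pos hτ₂ hττ s).ne'
  have hfz1 : dfac τ₁ τ₂ (s+1) ≠ 0 := (dfac_pos hτ₂ hττ (s+1)).ne'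
  have hnz : dnum τ₁ τ₂ ((s:ℝ)+1) ≠ 0 := (dnum_pos hτ₂ hττ (by positivity)).ne'
  rw [dbinom, dbinom, dbinom, h1, h2, h3, dfac_succ]
  push_cast
  field_simp


omit hτ₂ hττ in
lemma dbinom_zero (x : ℝ) : dbinom τ₁ τ₂ x 0 = 1 := by simp [dbinom, dfall, dfac]

lemma vand2 (a b : ℝ) (n : ℕ) :
    dfall τ₁ τ₂ (a + b + n - 1) n =
      ∑ r ∈ Finset.range (n+1),
        dbinom τ₁ τ₂ (n:ℝ) r * τ₁ ^ (a * ((n:ℝ) - r)) * τ₂ ^ ((r:ℝ) * b) *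
          (dfall τ₁ τ₂ (a + r - 1) r * dfall τ₁ τ₂ (b + ↑(n - r) - 1) (n - r)) := by
  have hτ₁ : (0:ℝ) < τ₁ := hτ₂.trans hττ
  induction n with
  | zero =>
      simp [dfall, dbinom, dfac]
  | succ n ih =>
      set T : ℕ → ℕ → ℝ := fun m r =>
        dbinom τ₁ τ₂ (m:ℝ) r * τ₁ ^ (a * ((m:ℝ) - r)) * τ₂ ^ ((r:ℝ) * b) *
          (dfall τ₁ τ₂ (a + r - 1) r * dfall τ₁ τ₂ (b + ↑(m - r) - 1) (m - r)) with hT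
      set Y : ℕ → ℝ := fun r =>
        dbinom τ₁ τ₂ (n:ℝ) r * τ₁ ^ (a * ((n:ℝ) - r) + (a + r)) * τ₂ ^ ((r:ℝ) * b) *
          (dfall τ₁ τ₂ (a + r - 1) r * dfall τ₁ τ₂ (b + ↑(n + 1 - r) - 1) (n + 1 - r)) with hY
      set X : ℕ → ℝ := fun r =>
        dbinom τ₁ τ₂ (n:ℝ) r * τ₁ ^ (a * ((n:ℝ) - r)) * τ₂ ^ ((r:ℝ) * b + (b + ((n:ℝ) - r))) *
          (dfall τ₁ τ₂ (a + ↑(r+1) - 1) (r+1) * dfall τ₁ τ₂ (b + ↑(n - r) - 1) (n - r)) with hX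
      have key1 : ∀ r ∈ Finset.range (n+1),
          dnum τ₁ τ₂ (a + b + n) * T n r = Y r + X r := by
        intro r hr
        have hrn : r ≤ n := Nat.lt_succ_iff.mp (Finset.mem_range.mp hr)
        have hcast : ((n - r : ℕ) : ℝ) = (n:ℝ) - r := by rw [Nat.cast_sub hrn]
        have hsplit : dnum τ₁ τ₂ (a + b + n) =
            τ₁ ^ (a + (r:ℝ)) * dnum τ₁ τ₂ (b + ((n:ℝ) - r)) +
            τ₂ ^ (b + ((n:ℝ) - r)) * dnum τ₁ τ₂ (a + (r:ℝ)) := by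
          have := dnum_add (τ₁ := τ₁) (τ₂ := τ₂) hτ₂ hττ (b + ((n:ℝ) - r)) (a + (r:ℝ))
          rw [show (b + ((n:ℝ) - r)) + (a + (r:ℝ)) = a + b + n by ring] at this
          exact this
        have hB : dnum τ₁ τ₂ (b + ((n:ℝ) - r)) * dfall τ₁ τ₂ (b + ↑(n - r) - 1) (n - r)
            = dfall τ₁ τ₂ (b + ↑(n + 1 - r) - 1) (n + 1 - r) := by
          have h1 : n + 1 - r = (n - r) + 1 := by omega
          rw [h1, dfall_peel]
          have h2 : ((n - r + 1 : ℕ) : ℝ) = ((n-r:ℕ):ℝ) + 1 := by push_cast; ring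
          rw [h2, hcast]
          ring_nf
        have hA : dnum τ₁ τ₂ (a + (r:ℝ)) * dfall τ₁ τ₂ (a + r - 1) r
            = dfall τ₁ τ₂ (a + ↑(r+1) - 1) (r+1) := by
          rw [dfall_peel]; push_cast; ring_nf
        have e1 : τ₁ ^ (a * ((n:ℝ) - ↑r) + (a + ↑r)) =
            τ₁ ^ (a * ((n:ℝ) - ↑r)) * τ₁ ^ (a + (r:ℝ)) := Real.rpow_add hτ₁ _ _
        have e2 : τ₂ ^ ((r:ℝ) * b + (b + ((n:ℝ) - ↑r))) =
            τ₂ ^ ((r:ℝ) * b) * τ₂ ^ (b + ((n:ℝ) - ↑r)) := Real.rpow_add hτ₂ _ _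
        rw [hT, hY, hX]
        simp only
        rw [hsplit, e1, e2, ← hB, ← hA]
        ring
      have key2 : ∀ s : ℕ, T (n+1) (s+1) = Y (s+1) + X s := by
        intro s
        have hns : (n + 1) - (s + 1) = n - s := by omega
        rw [hT, hY, hX]
        simp only
        rw [pascal hτ₂ hττ n s, hns]
        have e3 : τ₁ ^ (a * ((n:ℝ) - ↑(s+1)) + (a + ↑(s+1))) =
            τ₁ ^ ((s:ℝ)+1) * τ₁ ^ (a * ((n:ℝ) - (s:ℝ))) := by
          rw [← Real.rpow_add hτ₁]; congr 1; push_cast; ring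
        have e4 : τ₂ ^ ((s:ℝ) * b + (b + ((n:ℝ) - ↑s))) =
            τ₂ ^ ((n:ℝ) - (s:ℝ)) * τ₂ ^ ((↑(s+1):ℝ) * b) := by
          rw [← Real.rpow_add hτ₂]; congr 1; push_cast; ring
        have e5 : τ₁ ^ (a * ((↑(n+1):ℝ) - ↑(s+1))) = τ₁ ^ (a * ((n:ℝ) - (s:ℝ))) := by
          congr 1; push_cast; ring
        rw [e5, e3, e4]
        ring
      have edge0 : T (n+1) 0 = Y 0 := by
        rw [hT, hY]
        simp only [Nat.sub_zero, Nat.cast_zero, dbinom_zero]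
        congr 2
        push_cast; ring
      have edgetop : Y (n+1) = 0 := by
        rw [hY]
        simp only [dbinom, dfall_nat_self_succ, zero_div, zero_mul, mul_zero]
      have hpeel : dfall τ₁ τ₂ (a + b + ↑(n+1) - 1) (n+1) =
          dnum τ₁ τ₂ (a + b + n) * dfall τ₁ τ₂ (a + b + ↑n - 1) n := by
        have h1 : a + b + ↑(n+1) - 1 = (a + b + ↑n - 1) + 1 := by push_cast; ring
        rw [h1, dfall_peel]
        ring_nf
      calc dfall τ₁ τ₂ (a + b + ↑(n+1) - 1) (n+1)
          = ∑ r ∈ Finset.range (n+1), dnum τ₁ τ₂ (a + b + n) * T n r := by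
            rw [hpeel, ih, Finset.mul_sum]
        _ = ∑ r ∈ Finset.range (n+1), (Y r + X r) := Finset.sum_congr rfl key1
        _ = ∑ r ∈ Finset.range (n+1), Y r + ∑ r ∈ Finset.range (n+1), X r := by
            rw [Finset.sum_add_distrib]
        _ = ∑ s ∈ Finset.range (n+1+1), T (n+1) s := by
            rw [Finset.sum_range_succ' (fun s => T (n+1) s) (n+1)]
            have h5 : ∑ s ∈ Finset.range (n+1), Y (s+1) = ∑ s ∈ Finset.range n, Y (s+1) := by
              rw [Finset.sum_range_succ, edgetop, add_zero]
            have h6 : ∑ r ∈ Finset.range (n+1), Y r = ∑ s ∈ Finset.range n, Y (s+1) + Y 0 :=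
              Finset.sum_range_succ' Y n
            simp only [key2, edge0]
            rw [Finset.sum_add_distrib, h5, h6]
            ring

set_option maxHeartbeats 2000000 in
lemma main_aux (k : ℕ) (hk : 1 ≤ k) : ∀ (n : ℕ) (x : Fin (k + 1) → ℝ),
    dfall τ₁ τ₂ (∑ i, x i + n - 1) n =
      ∑ r ∈ (Fintype.piFinset fun _ : Fin k => Finset.range (n + 1)).filter
          (fun r => ∑ j, r j ≤ n),
        dmulti τ₁ τ₂ (n : ℝ) r *
          τ₁ ^ (∑ j : Fin k, x j.castSucc *
              ((n : ℝ) - ((∑ i ∈ Finset.Iic j, r i : ℕ) : ℝ))) *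
          τ₂ ^ (∑ j : Fin k, (r j : ℝ) *
              (∑ i ∈ Finset.univ.filter fun i : Fin (k + 1) => (j : ℕ) < (i : ℕ), x i)) *
          ∏ j : Fin (k + 1),
            dfall τ₁ τ₂ (x j + ((Fin.snoc r (n - ∑ i, r i) : Fin (k + 1) → ℕ) j : ℝ) - 1)
              ((Fin.snoc r (n - ∑ i, r i) : Fin (k + 1) → ℕ) j) := by
  induction k, hk using Nat.le_induction with
  | base =>
      intro n x
      have h0 : ∑ i, x i = x 0 + x 1 := by rw [Fin.sum_univ_two]
      rw [h0, vand2 hτ₂ hττ (x 0) (x 1) n]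
      refine Finset.sum_nbij' (fun r₀ => fun _ : Fin 1 => r₀) (fun r => r 0) ?_ ?_ ?_ ?_ ?_
      · intro r₀ hr₀
        simp only [Finset.mem_filter, Fintype.mem_piFinset]
        exact ⟨fun _ => hr₀, by simpa using Nat.lt_succ_iff.mp (Finset.mem_range.mp hr₀)⟩
      · intro r hr
        simp only [Finset.mem_filter, Fintype.mem_piFinset] at hr
        exact hr.1 0
      · intro r₀ _; rfl
      · intro r _; funext i; exact congrArg r (Subsingleton.elim _ _)
      · intro r₀ hr₀
        have hr₀n : r₀ ≤ n := Nat.lt_succ_iff.mp (Finset.mem_range.mp hr₀)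
        have e1 : dmulti τ₁ τ₂ (n:ℝ) (fun _ : Fin 1 => r₀) = dbinom τ₁ τ₂ (n:ℝ) r₀ := by
          simp [dmulti, dbinom]
        have e2 : (∑ j : Fin 1, x j.castSucc *
              ((n : ℝ) - ((∑ i ∈ Finset.Iic j, (fun _ : Fin 1 => r₀) i : ℕ) : ℝ)))
            = x 0 * ((n:ℝ) - r₀) := by
          rw [Fin.sum_univ_one, sum_Iic_zero]
          rfl
        have e3 : (∑ j : Fin 1, ((r₀:ℕ) : ℝ) *
              (∑ i ∈ Finset.univ.filter fun i : Fin 2 => (j : ℕ) < (i : ℕ), x i))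
            = (r₀ : ℝ) * x 1 := by
          rw [Fin.sum_univ_one]
          congr 1
          rw [Finset.sum_filter, Fin.sum_univ_two]
          norm_num
        have e4 : (∏ j : Fin 2,
            dfall τ₁ τ₂ (x j + ((Fin.snoc (fun _ : Fin 1 => r₀) (n - ∑ i : Fin 1, r₀) : Fin 2 → ℕ) j : ℝ) - 1)
              ((Fin.snoc (fun _ : Fin 1 => r₀) (n - ∑ i : Fin 1, r₀) : Fin 2 → ℕ) j))
            = dfall τ₁ τ₂ (x 0 + r₀ - 1) r₀ * dfall τ₁ τ₂ (x 1 + ↑(n - r₀) - 1) (n - r₀) := by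
          rw [Fin.prod_univ_two]
          have h1 : (Fin.snoc (fun _ : Fin 1 => r₀) (n - ∑ _i : Fin 1, r₀) : Fin 2 → ℕ) 0 = r₀ := by
            simp [Fin.snoc]
          have h2 : (Fin.snoc (fun _ : Fin 1 => r₀) (n - ∑ _i : Fin 1, r₀) : Fin 2 → ℕ) 1 = n - r₀ := by
            simp [Fin.snoc]
          rw [h1, h2]
        rw [e1, e2, e3, e4]
  | succ k hk1 ih =>
      intro n x
      have hτ₁ : (0:ℝ) < τ₁ := hτ₂.trans hττ
      set x' : Fin (k+1) → ℝ := fun i => x i.succ with hx'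
      have hsum : ∑ i, x i = x 0 + ∑ i, x' i := by rw [Fin.sum_univ_succ]
      rw [hsum, vand2 hτ₂ hττ (x 0) (∑ i, x' i) n]
      have hsig : ∀ G : (Fin (k+1) → ℕ) → ℝ,
          ∑ r ∈ ((Fintype.piFinset fun _ : Fin (k+1) => Finset.range (n + 1)).filter
            (fun r => ∑ j, r j ≤ n)), G r
          = ∑ r₀ ∈ Finset.range (n+1),
              ∑ r' ∈ ((Fintype.piFinset fun _ : Fin k => Finset.range ((n - r₀) + 1)).filter
                (fun r' => ∑ j, r' j ≤ n - r₀)), G (Fin.cons r₀ r') := by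
        intro G
        rw [← Finset.sum_sigma (Finset.range (n+1))
            (fun r₀ => (Fintype.piFinset fun _ : Fin k => Finset.range ((n - r₀) + 1)).filter
                (fun r' => ∑ j, r' j ≤ n - r₀))
            (fun p => G (Fin.cons p.1 p.2))]
        refine Finset.sum_nbij' (fun r : Fin (k+1) → ℕ =>
            (Sigma.mk (r 0) (Fin.tail r) : Σ _ : ℕ, (Fin k → ℕ)))
            (fun p => Fin.cons p.1 p.2) ?_ ?_ ?_ ?_ ?_
        · intro r hr
          simp only [Finset.mem_filter, Fintype.mem_piFinset, Finset.mem_range] at hr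
          obtain ⟨h1, h2⟩ := hr
          have hr0 : r 0 ≤ ∑ j, r j :=
            Finset.single_le_sum (fun i _ => Nat.zero_le (r i)) (Finset.mem_univ 0)
          have htail : ∑ j, r j = r 0 + ∑ j : Fin k, Fin.tail r j := by
            rw [Fin.sum_univ_succ]; rfl
          simp only [Finset.mem_sigma, Finset.mem_filter, Fintype.mem_piFinset,
            Finset.mem_range]
          refine ⟨by omega, fun j => ?_, by omega⟩
          have : Fin.tail r j ≤ ∑ j : Fin k, Fin.tail r j :=
            Finset.single_le_sum (fun i _ => Nat.zero_le _) (Finset.mem_univ j)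
          omega
        · intro p hp
          simp only [Finset.mem_sigma, Finset.mem_filter, Fintype.mem_piFinset,
            Finset.mem_range] at hp
          obtain ⟨h1, h2, h3⟩ := hp
          simp only [Finset.mem_filter, Fintype.mem_piFinset, Finset.mem_range]
          constructor
          · intro j
            refine Fin.cases ?_ (fun j' => ?_) j
            · simpa using h1
            · rw [Fin.cons_succ]; have := h2 j'; omega
          · rw [Fin.sum_cons]; omega
        · intro r _
          show Fin.cons (r 0) (Fin.tail r) = r
          rw [Fin.cons_self_tail]
        · intro p _
          obtain ⟨p1, p2⟩ := p
          simp [Fin.tail_cons]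
        · intro r _
          show G r = G (Fin.cons (r 0) (Fin.tail r))
          rw [Fin.cons_self_tail]
      rw [hsig]
      refine Finset.sum_congr rfl fun r₀ hr₀ => ?_
      have hr₀n : r₀ ≤ n := Nat.lt_succ_iff.mp (Finset.mem_range.mp hr₀)
      have hcast₀ : ((n - r₀ : ℕ) : ℝ) = (n:ℝ) - r₀ := by rw [Nat.cast_sub hr₀n]
      have distr : ∀ (c A : ℝ) (s : Finset (Fin k → ℕ)) (g : (Fin k → ℕ) → ℝ),
          c * (A * ∑ r' ∈ s, g r') = ∑ r' ∈ s, c * (A * g r') := by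
        intro c A s g; rw [Finset.mul_sum, Finset.mul_sum]
      rw [ih (n - r₀) x', distr]
      refine Finset.sum_congr rfl fun r' hr' => ?_
      simp only [Finset.mem_filter, Fintype.mem_piFinset, Finset.mem_range] at hr'
      obtain ⟨-, hs'⟩ := hr'
      have hcons0 : (Fin.cons r₀ r' : Fin (k+1) → ℕ) 0 = r₀ := rfl
      have hsumcons : ∑ j, (Fin.cons r₀ r' : Fin (k+1) → ℕ) j = r₀ + ∑ j, r' j :=
        Fin.sum_cons r₀ r'
      -- (1) dmulti
      have c1 : dmulti τ₁ τ₂ (n:ℝ) (Fin.cons r₀ r') =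
          dbinom τ₁ τ₂ (n:ℝ) r₀ * dmulti τ₁ τ₂ (↑(n - r₀)) r' := by
        rw [dmulti, dmulti, dbinom, hsumcons, dfall_add]
        have hp : ∏ j, dfac τ₁ τ₂ ((Fin.cons r₀ r' : Fin (k+1) → ℕ) j) =
            dfac τ₁ τ₂ r₀ * ∏ j, dfac τ₁ τ₂ (r' j) := by
          rw [Fin.prod_univ_succ]; rfl
        rw [hp, hcast₀, div_mul_div_comm]
      -- (2) τ₁ exponent
      have c2 : (∑ j : Fin (k+1), x j.castSucc *
            ((n : ℝ) - ((∑ i ∈ Finset.Iic j, (Fin.cons r₀ r' : Fin (k+1) → ℕ) i : ℕ) : ℝ)))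
          = x 0 * ((n:ℝ) - r₀) + ∑ j : Fin k, x' j.castSucc *
            ((↑(n - r₀) : ℝ) - ((∑ i ∈ Finset.Iic j, r' i : ℕ) : ℝ)) := by
        rw [Fin.sum_univ_succ]
        congr 1
        · refine Finset.sum_congr rfl fun j _ => ?_
          rw [sum_Iic_cons]
          have hj : ∑ i ∈ Finset.Iic j, r' i ≤ ∑ j, r' j :=
            Finset.sum_le_sum_of_subset (Finset.subset_univ _)
          have : x (j.succ.castSucc) = x' j.castSucc := by
            rw [hx', ← Fin.succ_castSucc]
          rw [this]
          congr 1
          push_cast [Nat.cast_sub hr₀n, Nat.cast_sub]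
          ring
      have c2' : τ₁ ^ (∑ j : Fin (k+1), x j.castSucc *
            ((n : ℝ) - ((∑ i ∈ Finset.Iic j, (Fin.cons r₀ r' : Fin (k+1) → ℕ) i : ℕ) : ℝ)))
          = τ₁ ^ (x 0 * ((n:ℝ) - r₀)) * τ₁ ^ (∑ j : Fin k, x' j.castSucc *
            ((↑(n - r₀) : ℝ) - ((∑ i ∈ Finset.Iic j, r' i : ℕ) : ℝ))) := by
        rw [c2, Real.rpow_add hτ₁]
      -- (3) τ₂ exponent
      have c3a : ∑ i ∈ Finset.univ.filter
            (fun i : Fin (k+2) => ((0 : Fin (k+1)) : ℕ) < (i : ℕ)), x i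
          = ∑ i, x' i := by
        rw [Finset.sum_filter, Fin.sum_univ_succ]
        simp [hx', Fin.val_zero, Fin.val_succ]
      have c3b : ∀ j : Fin k,
          ∑ i ∈ Finset.univ.filter (fun i : Fin (k+2) => ((j.succ : Fin (k+1)) : ℕ) < (i : ℕ)), x i
          = ∑ i ∈ Finset.univ.filter (fun i : Fin (k+1) => (j : ℕ) < (i : ℕ)), x' i := by
        intro j
        rw [Finset.sum_filter, Finset.sum_filter, Fin.sum_univ_succ]
        have h0 : ¬ ((j.succ : Fin (k+1)) : ℕ) < ((0 : Fin (k+2)) : ℕ) := by simp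
        rw [if_neg h0, zero_add]
        refine Finset.sum_congr rfl fun i _ => ?_
        have : (((j.succ : Fin (k+1)) : ℕ) < ((i.succ : Fin (k+2)) : ℕ)) ↔ ((j:ℕ) < (i:ℕ)) := by
          simp [Fin.val_succ]
        simp only [this]
        rfl
      have c3 : (∑ j : Fin (k+1), ((Fin.cons r₀ r' : Fin (k+1) → ℕ) j : ℝ) *
            (∑ i ∈ Finset.univ.filter fun i : Fin (k+2) => (j : ℕ) < (i : ℕ), x i))
          = (r₀:ℝ) * ∑ i, x' i + ∑ j : Fin k, (r' j : ℝ) *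
            (∑ i ∈ Finset.univ.filter fun i : Fin (k+1) => (j : ℕ) < (i : ℕ), x' i) := by
        rw [Fin.sum_univ_succ]
        congr 1
        · rw [hcons0, c3a]
        · refine Finset.sum_congr rfl fun j _ => ?_
          rw [Fin.cons_succ, c3b j]
      have c3' : τ₂ ^ (∑ j : Fin (k+1), ((Fin.cons r₀ r' : Fin (k+1) → ℕ) j : ℝ) *
            (∑ i ∈ Finset.univ.filter fun i : Fin (k+2) => (j : ℕ) < (i : ℕ), x i))
          = τ₂ ^ ((r₀:ℝ) * ∑ i, x' i) * τ₂ ^ (∑ j : Fin k, (r' j : ℝ) *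
            (∑ i ∈ Finset.univ.filter fun i : Fin (k+1) => (j : ℕ) < (i : ℕ), x' i)) := by
        rw [c3, Real.rpow_add hτ₂]
      -- (4) product
      have hmm : n - ∑ j, (Fin.cons r₀ r' : Fin (k+1) → ℕ) j = (n - r₀) - ∑ j, r' j := by
        rw [hsumcons]; omega
      have c4 : (∏ j : Fin (k+2),
            dfall τ₁ τ₂ (x j + ((Fin.snoc (Fin.cons r₀ r')
                (n - ∑ i, (Fin.cons r₀ r' : Fin (k+1) → ℕ) i) : Fin (k+2) → ℕ) j : ℝ) - 1)
              ((Fin.snoc (Fin.cons r₀ r')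
                (n - ∑ i, (Fin.cons r₀ r' : Fin (k+1) → ℕ) i) : Fin (k+2) → ℕ) j))
          = dfall τ₁ τ₂ (x 0 + r₀ - 1) r₀ * ∏ j : Fin (k+1),
              dfall τ₁ τ₂ (x' j + ((Fin.snoc r' ((n - r₀) - ∑ i, r' i) : Fin (k+1) → ℕ) j : ℝ) - 1)
                ((Fin.snoc r' ((n - r₀) - ∑ i, r' i) : Fin (k+1) → ℕ) j) := by
        rw [Fin.prod_univ_succ]
        congr 1
        · refine Finset.prod_congr rfl fun j _ => ?_
          rw [snoc_cons_succ, hmm, hx']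
      rw [c1, c2', c3', c4]
      ring

end Aux


/-- Multivariate deformed Vandermonde formula in rising-factorial form:
`[x₁+⋯+x_{k+1}+n−1]_n = Σ M(n; r₁,…,r_k) τ₁^{Σ_j x_j(n−s_j)}
  τ₂^{Σ_j r_j z_j} Π_j [x_j+r_j−1]_{r_j}`,
summed over tuples `(r₁,…,r_k)` with `r₁+⋯+r_k ≤ n`, where `s_j = r₁+⋯+r_j`,
`r_{k+1} = n − s_k` and `z_j = x_{j+1}+⋯+x_{k+1}`. -/
theorem deformed_multivariate_vandermonde_rising
    (τ₁ τ₂ : ℝ) (hτ₂ : 0 < τ₂) (hττ : τ₂ < τ₁)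
    (n k : ℕ) (hk : 1 ≤ k) (x : Fin (k + 1) → ℝ) :
    dfall τ₁ τ₂ (∑ i, x i + n - 1) n =
      ∑ r ∈ (Fintype.piFinset fun _ : Fin k => Finset.range (n + 1)).filter
          (fun r => ∑ j, r j ≤ n),
        dmulti τ₁ τ₂ (n : ℝ) r *
          τ₁ ^ (∑ j : Fin k, x j.castSucc *
              ((n : ℝ) - ((∑ i ∈ Finset.Iic j, r i : ℕ) : ℝ))) *
          τ₂ ^ (∑ j : Fin k, (r j : ℝ) *
              (∑ i ∈ Finset.univ.filter fun i : Fin (k + 1) => (j : ℕ) < (i : ℕ), x i)) *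
          ∏ j : Fin (k + 1),
            dfall τ₁ τ₂ (x j + ((Fin.snoc r (n - ∑ i, r i) : Fin (k + 1) → ℕ) j : ℝ) - 1)
              ((Fin.snoc r (n - ∑ i, r i) : Fin (k + 1) → ℕ) j) :=
  main_aux hτ₂ hττ k hk n x
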